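/- arXiv:1509.08456 — 4 statements merged into one kernel-verified Lean document; each statement's English description precedes it below -/
import Mathlib

section
/- For every q ∈ Δ_N there exist q̲, q̄ ∈ Δ_N such that every coordinate of q̲ and of q̄ is an extreme point of the corresponding simplex (i.e., for each i ∈ N, q̲_i and q̄_i each place the whole unit membership mass on a single subset containing i) and W(q̲) ≤ W(q) ≤ W(q̄). -/
open Finset

/-- Möbius inversion of a set function `w` on subsets of `N = Fin n`:
`μ^w(A) = ∑_{B ⊆ A} (−1)^{|A\B|} w(B)`. -/
def moebiusInv (n : ℕ) (w : Finset (Fin n) → ℝ) (A : Finset (Fin n)) : ℝ :=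
  ∑ B ∈ A.powerset, (-1 : ℝ) ^ (A \ B).card * w B

/-- Multilinear extension of `w`: `f^w(x) = ∑_{B ⊆ N} (∏_{i ∈ B} x_i) μ^w(B)`. -/
def mle (n : ℕ) (w : Finset (Fin n) → ℝ) (x : Fin n → ℝ) : ℝ :=
  ∑ B ∈ (univ : Finset (Fin n)).powerset, (∏ i ∈ B, x i) * moebiusInv n w B

/-- `q ∈ Δ_N`: `q i A` is the membership of data point `i` on subset `A`. -/
def IsMembership (n : ℕ) (q : Fin n → Finset (Fin n) → ℝ) : Prop :=
  (∀ i A, 0 ≤ q i A) ∧ (∀ i A, i ∉ A → q i A = 0) ∧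
  (∀ i : Fin n, ∑ A ∈ univ.powerset.filter (fun A => i ∈ A), q i A = 1)

/-- Global score `W(q) = ∑_{∅ ≠ A ⊆ N} f^w(q^A)`. -/
def score (n : ℕ) (w : Finset (Fin n) → ℝ) (q : Fin n → Finset (Fin n) → ℝ) : ℝ :=
  ∑ A ∈ univ.powerset.filter (fun A : Finset (Fin n) => A ≠ ∅),
    mle n w (fun i => q i A)

/-- `q_i` is an extreme point of `Δ_i`: the whole unit mass sits on a single
subset containing `i`. -/
def IsExtremeAt (n : ℕ) (q : Fin n → Finset (Fin n) → ℝ) (i : Fin n) : Prop :=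
  ∃ A : Finset (Fin n), i ∈ A ∧ q i A = 1 ∧ ∀ B : Finset (Fin n), B ≠ A → q i B = 0

-- delta distribution
def deltaQ (n : ℕ) (A : Finset (Fin n)) : Finset (Fin n) → ℝ :=
  fun B => if B = A then 1 else 0

lemma mle_update_eq (n : ℕ) (w : Finset (Fin n) → ℝ) (x : Fin n → ℝ) (i : Fin n) (t : ℝ) :
    mle n w (Function.update x i t) =
      (∑ B ∈ (univ : Finset (Fin n)).powerset.filter (fun B => i ∉ B),
        (∏ j ∈ B, x j) * moebiusInv n w B) +
      t * (∑ B ∈ (univ : Finset (Fin n)).powerset.filter (fun B => i ∈ B),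
        (∏ j ∈ B.erase i, x j) * moebiusInv n w B) := by
  rw [mle, ← Finset.sum_filter_add_sum_filter_not ((univ : Finset (Fin n)).powerset)
      (fun B => i ∈ B), add_comm]
  congr 1
  · apply Finset.sum_congr rfl
    intro B hB
    simp only [mem_filter] at hB
    congr 1
    apply Finset.prod_congr rfl
    intro j hj
    exact Function.update_of_ne (by rintro rfl; exact hB.2 hj) _ _
  · rw [Finset.mul_sum]
    apply Finset.sum_congr rfl
    intro B hB
    simp only [mem_filter] at hB
    rw [← Finset.mul_prod_erase B _ hB.2]
    have : ∏ j ∈ B.erase i, Function.update x i t j = ∏ j ∈ B.erase i, x j := by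
      apply Finset.prod_congr rfl
      intro j hj
      exact Function.update_of_ne (Finset.ne_of_mem_erase hj) _ _
    rw [this, Function.update_self]
    ring

lemma score_decomp (n : ℕ) (w : Finset (Fin n) → ℝ) (q : Fin n → Finset (Fin n) → ℝ)
    (hq : IsMembership n q) (i : Fin n) :
    score n w q = ∑ A' ∈ (univ : Finset (Fin n)).powerset.filter (fun A => i ∈ A),
      q i A' * score n w (Function.update q i (deltaQ n A')) := by
  have hsum := hq.2.2 i
  simp only [score, Finset.mul_sum]
  rw [Finset.sum_comm]
  apply Finset.sum_congr rfl
  intro A hA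
  have hpt : ∀ A' : Finset (Fin n),
      (fun j => Function.update q i (deltaQ n A') j A)
        = Function.update (fun j => q j A) i (deltaQ n A' A) := by
    intro A'
    funext j
    by_cases hj : j = i
    · subst hj; simp
    · simp [Function.update_of_ne hj]
  have hx : (fun j => q j A) = Function.update (fun j => q j A) i (q i A) := by
    simp
  calc mle n w (fun j => q j A)
      = mle n w (Function.update (fun j => q j A) i (q i A)) := by rw [← hx]
    _ = _ := by
        rw [mle_update_eq]
        have expand : ∀ A' ∈ (univ : Finset (Fin n)).powerset.filter (fun A => i ∈ A),
            q i A' * mle n w (fun j => Function.update q i (deltaQ n A') j A)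
            = q i A' * ((∑ B ∈ (univ : Finset (Fin n)).powerset.filter (fun B => i ∉ B),
                (∏ j ∈ B, q j A) * moebiusInv n w B) +
              (deltaQ n A' A) * (∑ B ∈ (univ : Finset (Fin n)).powerset.filter (fun B => i ∈ B),
                (∏ j ∈ B.erase i, q j A) * moebiusInv n w B)) := by
          intro A' _
          rw [hpt A', mle_update_eq]
        rw [Finset.sum_congr rfl expand]
        set C := ∑ B ∈ (univ : Finset (Fin n)).powerset.filter (fun B => i ∉ B),
            (∏ j ∈ B, q j A) * moebiusInv n w B
        set D := ∑ B ∈ (univ : Finset (Fin n)).powerset.filter (fun B => i ∈ B),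
            (∏ j ∈ B.erase i, q j A) * moebiusInv n w B
        have : ∑ A' ∈ (univ : Finset (Fin n)).powerset.filter (fun A => i ∈ A),
            q i A' * (C + deltaQ n A' A * D)
            = (∑ A' ∈ (univ : Finset (Fin n)).powerset.filter (fun A => i ∈ A), q i A') * C
              + (∑ A' ∈ (univ : Finset (Fin n)).powerset.filter (fun A => i ∈ A),
                  q i A' * deltaQ n A' A) * D := by
          rw [Finset.sum_mul, Finset.sum_mul, ← Finset.sum_add_distrib]
          apply Finset.sum_congr rfl
          intro A' _
          ring
        rw [this, hsum, one_mul]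
        have hdel : ∑ A' ∈ (univ : Finset (Fin n)).powerset.filter (fun A => i ∈ A),
            q i A' * deltaQ n A' A = q i A := by
          by_cases hiA : i ∈ A
          · rw [Finset.sum_eq_single A]
            · simp [deltaQ]
            · intro b _ hb
              simp [deltaQ, Ne.symm hb]
            · intro h
              exact absurd (by simp [hiA]) h
          · rw [hq.2.1 i A hiA]
            apply Finset.sum_eq_zero
            intro A' hA'
            simp only [mem_filter, mem_powerset] at hA'
            have : deltaQ n A' A = 0 := by
              simp only [deltaQ]
              rw [if_neg]
              rintro rfl; exact hiA hA'.2
            rw [this, mul_zero]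
        rw [hdel]

lemma update_membership (n : ℕ) (q : Fin n → Finset (Fin n) → ℝ) (hq : IsMembership n q)
    (i : Fin n) (A' : Finset (Fin n)) (hiA' : i ∈ A') :
    IsMembership n (Function.update q i (deltaQ n A')) := by
  refine ⟨?_, ?_, ?_⟩
  · intro j B
    by_cases hj : j = i
    · subst hj
      simp only [Function.update_self, deltaQ]
      split <;> norm_num
    · rw [Function.update_of_ne hj]
      exact hq.1 j B
  · intro j B hjB
    by_cases hj : j = i
    · subst hj
      simp only [Function.update_self, deltaQ]
      rw [if_neg]
      rintro rfl; exact hjB hiA'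
    · rw [Function.update_of_ne hj]
      exact hq.2.1 j B hjB
  · intro j
    by_cases hj : j = i
    · subst hj
      simp only [Function.update_self, deltaQ]
      rw [Finset.sum_eq_single A']
      · simp
      · intro b _ hb; simp [hb]
      · intro h; exact absurd (by simp [hiA']) h
    · simp only [Function.update_of_ne hj]
      exact hq.2.2 j

lemma update_extreme (n : ℕ) (q : Fin n → Finset (Fin n) → ℝ)
    (i : Fin n) (A' : Finset (Fin n)) (hiA' : i ∈ A') :
    IsExtremeAt n (Function.update q i (deltaQ n A')) i :=
  ⟨A', hiA', by simp [deltaQ], fun B hB => by simp [deltaQ, hB]⟩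

lemma update_extreme_preserve (n : ℕ) (q : Fin n → Finset (Fin n) → ℝ)
    (i j : Fin n) (A' : Finset (Fin n)) (hj : j ≠ i) (h : IsExtremeAt n q j) :
    IsExtremeAt n (Function.update q i (deltaQ n A')) j := by
  obtain ⟨A, h1, h2, h3⟩ := h
  exact ⟨A, h1, by rwa [Function.update_of_ne hj],
    fun B hB => by rw [Function.update_of_ne hj]; exact h3 B hB⟩

lemma exists_step (n : ℕ) (w : Finset (Fin n) → ℝ) (q : Fin n → Finset (Fin n) → ℝ)
    (hq : IsMembership n q) (i : Fin n) :
    (∃ A', i ∈ A' ∧ score n w (Function.update q i (deltaQ n A')) ≤ score n w q) ∧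
    (∃ A', i ∈ A' ∧ score n w q ≤ score n w (Function.update q i (deltaQ n A'))) := by
  have hdec := score_decomp n w q hq i
  have hsum := hq.2.2 i
  set s := (univ : Finset (Fin n)).powerset.filter (fun A => i ∈ A) with hs
  have hmem : ∀ A' ∈ s, i ∈ A' := by
    intro A' hA'
    simp only [hs, mem_filter] at hA'
    exact hA'.2
  have hpos : ∃ A' ∈ s, 0 < q i A' := by
    by_contra h
    push_neg at h
    have : ∑ A' ∈ s, q i A' = 0 := by
      apply Finset.sum_eq_zero
      intro A' hA'
      exact le_antisymm (h A' hA') (hq.1 i A')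
    rw [hsum] at this; norm_num at this
  constructor
  · by_contra h
    push_neg at h
    have hlt : ∀ A' ∈ s, score n w q < score n w (Function.update q i (deltaQ n A')) :=
      fun A' hA' => h A' (hmem A' hA')
    have : score n w q < score n w q := by
      calc score n w q = (∑ A' ∈ s, q i A') * score n w q := by rw [hsum, one_mul]
        _ = ∑ A' ∈ s, q i A' * score n w q := by rw [Finset.sum_mul]
        _ < ∑ A' ∈ s, q i A' * score n w (Function.update q i (deltaQ n A')) := by
            obtain ⟨A0, hA0, hA0pos⟩ := hpos
            apply Finset.sum_lt_sum
            · intro A' hA'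
              exact mul_le_mul_of_nonneg_left (le_of_lt (hlt A' hA')) (hq.1 i A')
            · exact ⟨A0, hA0, mul_lt_mul_of_pos_left (hlt A0 hA0) hA0pos⟩
        _ = score n w q := hdec.symm
    exact lt_irrefl _ this
  · by_contra h
    push_neg at h
    have hlt : ∀ A' ∈ s, score n w (Function.update q i (deltaQ n A')) < score n w q :=
      fun A' hA' => h A' (hmem A' hA')
    have : score n w q < score n w q := by
      calc score n w q = ∑ A' ∈ s, q i A' * score n w (Function.update q i (deltaQ n A')) := hdec
        _ < ∑ A' ∈ s, q i A' * score n w q := by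
            obtain ⟨A0, hA0, hA0pos⟩ := hpos
            apply Finset.sum_lt_sum
            · intro A' hA'
              exact mul_le_mul_of_nonneg_left (le_of_lt (hlt A' hA')) (hq.1 i A')
            · exact ⟨A0, hA0, mul_lt_mul_of_pos_left (hlt A0 hA0) hA0pos⟩
        _ = score n w q := by rw [← Finset.sum_mul, hsum, one_mul]
    exact lt_irrefl _ this

lemma down_induction (n : ℕ) (w : Finset (Fin n) → ℝ) (q : Fin n → Finset (Fin n) → ℝ)
    (hq : IsMembership n q) (k : ℕ) :
    ∃ q' : Fin n → Finset (Fin n) → ℝ, IsMembership n q' ∧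
      (∀ i : Fin n, (i : ℕ) < k → IsExtremeAt n q' i) ∧
      score n w q' ≤ score n w q := by
  induction k with
  | zero => exact ⟨q, hq, fun i hi => absurd hi (Nat.not_lt_zero _), le_refl _⟩
  | succ k ih =>
    obtain ⟨q', hq', hext, hle⟩ := ih
    by_cases hk : k < n
    · set i : Fin n := ⟨k, hk⟩ with hi
      obtain ⟨⟨A', hiA', hstep⟩, -⟩ := exists_step n w q' hq' i
      refine ⟨Function.update q' i (deltaQ n A'),
        update_membership n q' hq' i A' hiA', ?_, le_trans hstep hle⟩
      intro j hj
      rcases Nat.lt_succ_iff_lt_or_eq.mp hj with h | h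
      · exact update_extreme_preserve n q' i j A'
          (fun hje => by rw [hje] at h; exact lt_irrefl _ h) (hext j h)
      · have : j = i := Fin.ext h
        rw [this]
        exact update_extreme n q' i A' hiA'
    · refine ⟨q', hq', fun j hj => hext j ?_, hle⟩
      exact lt_of_lt_of_le j.isLt (Nat.le_of_not_lt hk)

lemma up_induction (n : ℕ) (w : Finset (Fin n) → ℝ) (q : Fin n → Finset (Fin n) → ℝ)
    (hq : IsMembership n q) (k : ℕ) :
    ∃ q' : Fin n → Finset (Fin n) → ℝ, IsMembership n q' ∧
      (∀ i : Fin n, (i : ℕ) < k → IsExtremeAt n q' i) ∧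
      score n w q ≤ score n w q' := by
  induction k with
  | zero => exact ⟨q, hq, fun i hi => absurd hi (Nat.not_lt_zero _), le_refl _⟩
  | succ k ih =>
    obtain ⟨q', hq', hext, hle⟩ := ih
    by_cases hk : k < n
    · set i : Fin n := ⟨k, hk⟩ with hi
      obtain ⟨-, ⟨A', hiA', hstep⟩⟩ := exists_step n w q' hq' i
      refine ⟨Function.update q' i (deltaQ n A'),
        update_membership n q' hq' i A' hiA', ?_, le_trans hle hstep⟩
      intro j hj
      rcases Nat.lt_succ_iff_lt_or_eq.mp hj with h | h
      · exact update_extreme_preserve n q' i j A'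
          (fun hje => by rw [hje] at h; exact lt_irrefl _ h) (hext j h)
      · have : j = i := Fin.ext h
        rw [this]
        exact update_extreme n q' i A' hiA'
    · refine ⟨q', hq', fun j hj => hext j ?_, hle⟩
      exact lt_of_lt_of_le j.isLt (Nat.le_of_not_lt hk)

/-- for every `q ∈ Δ_N` there exist `q̲, q̄ ∈ Δ_N` whose coordinates
are all extreme points of the corresponding simplices and
`W(q̲) ≤ W(q) ≤ W(q̄)`. -/
theorem extreme_bounds (n : ℕ) (w : Finset (Fin n) → ℝ) (hw0 : w ∅ = 0)
    (q : Fin n → Finset (Fin n) → ℝ) (hq : IsMembership n q) :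
    ∃ ql qu : Fin n → Finset (Fin n) → ℝ,
      IsMembership n ql ∧ IsMembership n qu ∧
      (∀ i : Fin n, IsExtremeAt n ql i) ∧ (∀ i : Fin n, IsExtremeAt n qu i) ∧
      score n w ql ≤ score n w q ∧ score n w q ≤ score n w qu := by
  obtain ⟨ql, hql, hextl, hlel⟩ := down_induction n w q hq n
  obtain ⟨qu, hqu, hextu, hleu⟩ := up_induction n w q hq n
  exact ⟨ql, qu, hql, hqu, fun i => hextl i i.isLt, fun i => hextu i i.isLt, hlel, hleu⟩
end

section
/- Let q ∈ Δ_N be an extreme-point profile determined by an assignment i ↦ A_i with i ∈ A_i ⊆ N (i.e., q_i^{A_i} = 1 for each i). For each A ⊆ N let T_A = {i ∈ N : A_i = A}. Then W(q) = Σ_{A : T_A ≠ ∅} w(T_A), and the nonempty sets T_A form a partition of N; in particular, the value of W at any extreme-point profile equals Σ_{B∈P} w(B) for some partition P of N. -/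
open Finset

lemma neg_one_sum {α : Type*} [DecidableEq α] (S : Finset α) :
    ∑ m ∈ S.powerset, (-1 : ℝ) ^ m.card = if S = ∅ then 1 else 0 := by
  have h := @Finset.sum_powerset_neg_one_pow_card α _ S
  have h2 := congrArg (fun z : ℤ => (z : ℝ)) h
  push_cast at h2
  rw [h2]

lemma sum_moebius (n : ℕ) (w : Finset (Fin n) → ℝ) (S : Finset (Fin n)) :
    ∑ B ∈ S.powerset, moebiusInv n w B = w S := by
  unfold moebiusInv
  rw [Finset.sum_comm' (s' := fun C => S.powerset.filter (fun B => C ⊆ B))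
      (t' := S.powerset) (fun B C => by
        simp only [mem_powerset, mem_filter]
        constructor
        · rintro ⟨h1, h2⟩; exact ⟨⟨h1, h2⟩, h2.trans h1⟩
        · rintro ⟨⟨h1, h2⟩, _⟩; exact ⟨h1, h2⟩)]
  have key : ∀ C ∈ S.powerset,
      (∑ B ∈ S.powerset.filter (fun B => C ⊆ B), (-1 : ℝ) ^ (B \ C).card * w C)
        = (if C = S then 1 else 0) * w C := by
    intro C hC
    rw [mem_powerset] at hC
    rw [← Finset.sum_mul]
    congr 1
    have himg : S.powerset.filter (fun B => C ⊆ B) = (S \ C).powerset.image (fun D => D ∪ C) := by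
      ext B
      simp only [mem_filter, mem_powerset, mem_image]
      constructor
      · rintro ⟨h1, h2⟩
        exact ⟨B \ C, sdiff_subset_sdiff h1 le_rfl, by rw [sdiff_union_of_subset h2]⟩
      · rintro ⟨D, hD, rfl⟩
        constructor
        · exact union_subset ((hD.trans sdiff_subset)) hC
        · exact subset_union_right
    rw [himg, Finset.sum_image (by
      intro x hx y hy hxy
      rw [mem_coe, mem_powerset] at hx hy
      have hx' : Disjoint x C := sdiff_disjoint.mono_left hx
      have hy' : Disjoint y C := sdiff_disjoint.mono_left hy
      calc x = (x ∪ C) \ C := by rw [union_sdiff_right, hx'.sdiff_eq_left]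
        _ = (y ∪ C) \ C := by rw [show x ∪ C = y ∪ C from hxy]
        _ = y := by rw [union_sdiff_right, hy'.sdiff_eq_left])]
    have : ∀ D ∈ (S \ C).powerset, (-1 : ℝ) ^ ((D ∪ C) \ C).card = (-1 : ℝ) ^ D.card := by
      intro D hD
      rw [mem_powerset] at hD
      have : Disjoint D C := sdiff_disjoint.mono_left hD
      rw [union_sdiff_right, this.sdiff_eq_left]
    rw [Finset.sum_congr rfl this, neg_one_sum]
    by_cases h : C = S
    · simp [h]
    · have : S \ C ≠ ∅ := by
        intro he
        exact h (le_antisymm hC (by rwa [sdiff_eq_empty_iff_subset] at he))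
      simp [h, this]
  rw [Finset.sum_congr rfl key]
  simp only [ite_mul, one_mul, zero_mul]
  rw [Finset.sum_ite_eq' S.powerset S (fun C => w C)]
  simp [mem_powerset]

lemma mle_indicator (n : ℕ) (w : Finset (Fin n) → ℝ) (T : Finset (Fin n)) :
    mle n w (fun i => if i ∈ T then (1 : ℝ) else 0) = w T := by
  unfold mle
  have h1 : ∀ B ∈ (univ : Finset (Fin n)).powerset,
      (∏ i ∈ B, if i ∈ T then (1 : ℝ) else 0) * moebiusInv n w B
        = if B ⊆ T then moebiusInv n w B else 0 := by
    intro B _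
    by_cases h : B ⊆ T
    · rw [if_pos h, Finset.prod_congr rfl (fun i hi => if_pos (h hi)), prod_const_one, one_mul]
    · rw [if_neg h]
      obtain ⟨i, hiB, hiT⟩ := not_subset.1 h
      rw [Finset.prod_eq_zero hiB (if_neg hiT : (if i ∈ T then (1:ℝ) else 0) = 0), zero_mul]
  rw [Finset.sum_congr rfl h1, ← Finset.sum_filter]
  have h2 : (univ : Finset (Fin n)).powerset.filter (fun B => B ⊆ T) = T.powerset := by
    ext B; simp [mem_powerset]
  rw [h2, sum_moebius]

/-- `P` is a partition of `N = Fin n`: a family of nonempty pairwise disjoint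
subsets of `N` whose union is `N`. -/
def IsPartition (n : ℕ) (P : Finset (Finset (Fin n))) : Prop :=
  ∅ ∉ P ∧ (∀ A ∈ P, ∀ B ∈ P, A ≠ B → Disjoint A B) ∧ P.biUnion id = univ

/-- for the extreme-point profile `q` determined by an assignment
`i ↦ A_i` with `i ∈ A_i` (i.e. `q_i^{A_i} = 1`), letting
`T_A = {i : A_i = A}`, one has `W(q) = ∑_{A : T_A ≠ ∅} w(T_A)`; the nonempty
`T_A` form a partition of `N`; and in particular `W(q) = ∑_{B ∈ P} w(B)` for
some partition `P` of `N`. -/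
theorem extreme_profile_score (n : ℕ) (w : Finset (Fin n) → ℝ) (hw0 : w ∅ = 0)
    (assign : Fin n → Finset (Fin n)) (hassign : ∀ i : Fin n, i ∈ assign i) :
    score n w (fun i A => if A = assign i then (1 : ℝ) else 0) =
      (∑ A ∈ univ.powerset.filter
          (fun A : Finset (Fin n) => (univ.filter fun i => assign i = A).Nonempty),
        w (univ.filter fun i => assign i = A)) ∧
    IsPartition n ((univ.powerset.filter
        (fun A : Finset (Fin n) => (univ.filter fun i => assign i = A).Nonempty)).image
      (fun A => univ.filter fun i => assign i = A)) ∧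
    ∃ P : Finset (Finset (Fin n)), IsPartition n P ∧
      score n w (fun i A => if A = assign i then (1 : ℝ) else 0) = ∑ B ∈ P, w B := by
  set T : Finset (Fin n) → Finset (Fin n) :=
    fun A => univ.filter (fun i => assign i = A) with hT
  have hmemT : ∀ i A, i ∈ T A ↔ assign i = A := by
    intro i A; simp [hT]
  -- score computation
  have hscore : score n w (fun i A => if A = assign i then (1 : ℝ) else 0) =
      ∑ A ∈ univ.powerset.filter (fun A : Finset (Fin n) => A ≠ ∅), w (T A) := by
    unfold score
    refine Finset.sum_congr rfl fun A _ => ?_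
    have : (fun i => if A = assign i then (1 : ℝ) else 0)
        = fun i => if i ∈ T A then (1 : ℝ) else 0 := by
      funext i
      by_cases h : assign i = A
      · rw [if_pos h.symm, if_pos ((hmemT i A).2 h)]
      · rw [if_neg (fun he => h he.symm), if_neg (fun hm => h ((hmemT i A).1 hm))]
    rw [this, mle_indicator]
  have hsub : univ.powerset.filter (fun A : Finset (Fin n) => (T A).Nonempty)
      ⊆ univ.powerset.filter (fun A : Finset (Fin n) => A ≠ ∅) := by
    intro A hA
    rw [mem_filter] at hA ⊢
    obtain ⟨i, hi⟩ := hA.2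
    rw [hmemT] at hi
    exact ⟨hA.1, fun he => notMem_empty i (by rw [← he, ← hi]; exact hassign i)⟩
  have hmain : score n w (fun i A => if A = assign i then (1 : ℝ) else 0) =
      ∑ A ∈ univ.powerset.filter (fun A : Finset (Fin n) => (T A).Nonempty), w (T A) := by
    rw [hscore]
    refine (Finset.sum_subset hsub fun A hA hA' => ?_).symm
    rw [mem_filter] at hA'
    push_neg at hA'
    rw [mem_filter] at hA
    rw [hA' hA.1, hw0]
  -- partition
  have hpart : IsPartition n ((univ.powerset.filter
      (fun A : Finset (Fin n) => (T A).Nonempty)).image T) := by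
    refine ⟨?_, ?_, ?_⟩
    · intro hmem
      rw [mem_image] at hmem
      obtain ⟨A, hA, he⟩ := hmem
      rw [mem_filter] at hA
      exact hA.2.ne_empty he
    · intro A' hA' B' hB' hne
      rw [mem_image] at hA' hB'
      obtain ⟨A, _, rfl⟩ := hA'
      obtain ⟨B, _, rfl⟩ := hB'
      rw [Finset.disjoint_left]
      intro i hiA hiB
      rw [hmemT] at hiA hiB
      exact hne (by rw [← hiA, ← hiB])
    · ext i
      simp only [mem_biUnion, id, mem_univ, iff_true]
      refine ⟨T (assign i), ?_, (hmemT i _).2 rfl⟩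
      rw [mem_image]
      exact ⟨assign i, by rw [mem_filter]; exact ⟨mem_powerset.2 (subset_univ _),
        ⟨i, (hmemT i _).2 rfl⟩⟩, rfl⟩
  refine ⟨hmain, hpart, _, hpart, ?_⟩
  rw [hmain, Finset.sum_image]
  intro A hA B hB he
  rw [mem_coe, mem_filter] at hA
  obtain ⟨i, hi⟩ := hA.2
  have hi' := hi
  rw [he] at hi'
  rw [hmemT] at hi hi'
  rw [← hi, hi']
end

section
/- Let i ∈ N and A ∈ 2^N_i with A\{i} ≠ ∅. If q ∈ Δ_N satisfies q_j^A = 1 for all j ∈ A\{i}, then w_{q_{−i}}(A) = w(A) − w(A\{i}); moreover w_{q_{−i}}({i}) = w({i}) regardless of q_{−i}. -/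
open Finset

/-- `w_{q_{−i}}(A) = ∑_{B ⊆ A\{i}} (∏_{j∈B} q_j^A) μ^w(B ∪ {i})`. -/
def wDer (n : ℕ) (w : Finset (Fin n) → ℝ) (q : Fin n → Finset (Fin n) → ℝ)
    (i : Fin n) (A : Finset (Fin n)) : ℝ :=
  ∑ B ∈ (A.erase i).powerset, (∏ j ∈ B, q j A) * moebiusInv n w (insert i B)

lemma sum_neg_one_pow_card_real {α : Type*} [DecidableEq α] (x : Finset α) :
    (∑ m ∈ x.powerset, (-1 : ℝ) ^ m.card) = if x = ∅ then 1 else 0 := by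
  have := Finset.sum_powerset_neg_one_pow_card (x := x)
  have h : ((∑ m ∈ x.powerset, (-1 : ℤ) ^ m.card : ℤ) : ℝ)
      = ∑ m ∈ x.powerset, (-1 : ℝ) ^ m.card := by push_cast; rfl
  rw [← h, this]; split <;> simp

lemma sum_moebiusInv (n : ℕ) (w : Finset (Fin n) → ℝ) (A : Finset (Fin n)) :
    ∑ B ∈ A.powerset, moebiusInv n w B = w A := by
  classical
  unfold moebiusInv
  rw [Finset.sum_comm' (s' := fun C => A.powerset.filter (fun B => C ⊆ B))
      (t' := A.powerset) (by
        intro B C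
        simp only [Finset.mem_powerset, Finset.mem_filter]
        constructor
        · rintro ⟨h1, h2⟩; exact ⟨⟨h1, h2⟩, h2.trans h1⟩
        · rintro ⟨⟨h1, h2⟩, _⟩; exact ⟨h1, h2⟩)]
  have key : ∀ C ∈ A.powerset,
      (∑ B ∈ A.powerset.filter (fun B => C ⊆ B), (-1 : ℝ) ^ (B \ C).card * w C)
      = if C = A then w A else 0 := by
    intro C hC
    rw [Finset.mem_powerset] at hC
    have : (∑ B ∈ A.powerset.filter (fun B => C ⊆ B), (-1 : ℝ) ^ (B \ C).card * w C)
        = ∑ D ∈ (A \ C).powerset, (-1 : ℝ) ^ D.card * w C := by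
      refine Finset.sum_bij' (fun B _ => B \ C) (fun D _ => D ∪ C) ?_ ?_ ?_ ?_ ?_
      · intro B hB
        simp only [Finset.mem_filter, Finset.mem_powerset] at hB ⊢
        exact Finset.sdiff_subset_sdiff hB.1 (le_refl _)
      · intro D hD
        simp only [Finset.mem_powerset] at hD
        simp only [Finset.mem_filter, Finset.mem_powerset]
        exact ⟨Finset.union_subset (hD.trans (Finset.sdiff_subset)) hC,
          Finset.subset_union_right⟩
      · intro B hB
        simp only [Finset.mem_filter, Finset.mem_powerset] at hB
        exact Finset.sdiff_union_of_subset hB.2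
      · intro D hD
        simp only [Finset.mem_powerset] at hD
        have : Disjoint D C := Finset.disjoint_of_subset_left hD Finset.sdiff_disjoint
        simp only [Finset.union_sdiff_right]
        exact Finset.sdiff_eq_self_of_disjoint this
      · intros; rfl
    rw [this, ← Finset.sum_mul, sum_neg_one_pow_card_real]
    rcases eq_or_ne C A with h | h
    · simp [h]
    · have : A \ C ≠ ∅ := by
        intro hempty
        exact h (Finset.Subset.antisymm hC
          (Finset.sdiff_eq_empty_iff_subset.mp hempty))
      simp [this, h]
  rw [Finset.sum_congr rfl key]
  simp

lemma sum_moebiusInv_insert (n : ℕ) (w : Finset (Fin n) → ℝ) (i : Fin n)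
    (S : Finset (Fin n)) (hiS : i ∉ S) :
    ∑ B ∈ S.powerset, moebiusInv n w (insert i B) = w (insert i S) - w S := by
  classical
  have h1 : w (insert i S) = ∑ B ∈ (insert i S).powerset, moebiusInv n w B :=
    (sum_moebiusInv n w _).symm
  rw [Finset.powerset_insert, Finset.sum_union, Finset.sum_image] at h1
  · rw [sum_moebiusInv] at h1; linarith
  · intro x hx y hy hxy
    rw [Finset.mem_coe, Finset.mem_powerset] at hx hy
    have hx' : i ∉ x := fun h => hiS (hx h)
    have hy' : i ∉ y := fun h => hiS (hy h)
    rw [← Finset.erase_insert hx', ← Finset.erase_insert hy', hxy]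
  · rw [Finset.disjoint_left]
    intro B hB hB'
    rw [Finset.mem_powerset] at hB
    rw [Finset.mem_image] at hB'
    obtain ⟨C, _, rfl⟩ := hB'
    exact hiS (hB (Finset.mem_insert_self i C))

/-- if `i ∈ A`, `A\{i} ≠ ∅` and `q_j^A = 1` for all `j ∈ A\{i}`,
then `w_{q_{−i}}(A) = w(A) − w(A\{i})`; moreover `w_{q_{−i}}({i}) = w({i})`
regardless of `q_{−i}`. -/
theorem wDer_of_full_members (n : ℕ) (w : Finset (Fin n) → ℝ) (hw0 : w ∅ = 0)
    (i : Fin n) (A : Finset (Fin n)) (hiA : i ∈ A) (hne : (A.erase i).Nonempty)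
    (q : Fin n → Finset (Fin n) → ℝ) (hq : IsMembership n q)
    (hfull : ∀ j ∈ A.erase i, q j A = 1) :
    wDer n w q i A = w A - w (A.erase i) ∧
    ∀ q' : Fin n → Finset (Fin n) → ℝ, IsMembership n q' →
      wDer n w q' i {i} = w {i} := by
  classical
  constructor
  · unfold wDer
    have hprod : ∀ B ∈ (A.erase i).powerset,
        (∏ j ∈ B, q j A) * moebiusInv n w (insert i B) = moebiusInv n w (insert i B) := by
      intro B hB
      rw [Finset.mem_powerset] at hB
      rw [Finset.prod_eq_one (fun j hj => hfull j (hB hj)), one_mul]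
    rw [Finset.sum_congr rfl hprod,
      sum_moebiusInv_insert n w i (A.erase i) (Finset.notMem_erase i A),
      Finset.insert_erase hiA]
  · intro q' _
    unfold wDer
    rw [show ({i} : Finset (Fin n)).erase i = ∅ by simp]
    have h := sum_moebiusInv_insert n w i ∅ (by simp)
    rw [Finset.powerset_empty, Finset.sum_singleton] at h ⊢
    rw [Finset.prod_empty, one_mul, h, hw0]
    simp
end

section
/- Let h be the partition function additively separated by a set function v (h(P) = Σ_{A∈P} v(A) for all partitions P of N). Then the Möbius inversion of h over the partition lattice of N, μ^h(P) = Σ_{Q ≤ P} μ_{𝒫^N}(Q,P) h(Q), vanishes at every partition P that is not modular, i.e., at every P having at least two blocks of cardinality greater than 1. -/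
open Finset

open scoped Classical

/-- Refinement order on partitions: `Q ≤ P` iff every block of `Q` is contained
in a block of `P`. -/
def Refines (n : ℕ) (Q P : Finset (Finset (Fin n))) : Prop :=
  ∀ B ∈ Q, ∃ A ∈ P, B ⊆ A

namespace MoebiusAux

variable {n : ℕ}

lemma refines_refl (P : Finset (Finset (Fin n))) : Refines n P P :=
  fun B hB => ⟨B, hB, subset_rfl⟩

lemma refines_trans {Q R S : Finset (Finset (Fin n))}
    (h1 : Refines n Q R) (h2 : Refines n R S) : Refines n Q S := by
  intro B hB
  obtain ⟨A, hA, hBA⟩ := h1 B hB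
  obtain ⟨C, hC, hAC⟩ := h2 A hA
  exact ⟨C, hC, hBA.trans hAC⟩

lemma mem_block {Q : Finset (Finset (Fin n))} (hQ : IsPartition n Q) (x : Fin n) :
    ∃ A ∈ Q, x ∈ A := by
  have hx : x ∈ Q.biUnion id := hQ.2.2 ▸ mem_univ x
  simpa using hx

lemma block_nonempty {Q : Finset (Finset (Fin n))} (hQ : IsPartition n Q)
    {B : Finset (Fin n)} (hB : B ∈ Q) : B.Nonempty :=
  Finset.nonempty_iff_ne_empty.2 fun h => hQ.1 (h ▸ hB)

lemma refines_subset {Q P : Finset (Finset (Fin n))} (hQ : IsPartition n Q)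
    (hP : IsPartition n P) (h1 : Refines n Q P) (h2 : Refines n P Q) : Q ⊆ P := by
  intro B hB
  obtain ⟨A, hA, hBA⟩ := h1 B hB
  obtain ⟨B', hB', hAB'⟩ := h2 A hA
  have hBB' : B = B' := by
    by_contra hne
    obtain ⟨x, hx⟩ := block_nonempty hQ hB
    exact (disjoint_left.1 (hQ.2.1 B hB B' hB' hne) hx) (hAB' (hBA hx))
  have : A = B := subset_antisymm (hBB' ▸ hAB') hBA
  exact this ▸ hA

lemma refines_antisymm {Q P : Finset (Finset (Fin n))} (hQ : IsPartition n Q)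
    (hP : IsPartition n P) (h1 : Refines n Q P) (h2 : Refines n P Q) : Q = P :=
  subset_antisymm (refines_subset hQ hP h1 h2) (refines_subset hP hQ h2 h1)

/-- The bottom partition: all singletons. -/
def botP (n : ℕ) : Finset (Finset (Fin n)) := univ.image fun i => {i}

lemma botP_isPartition : IsPartition n (botP n) := by
  refine ⟨?_, ?_, ?_⟩
  · intro h
    simp only [botP, mem_image] at h
    obtain ⟨i, -, hi⟩ := h
    exact (singleton_ne_empty i) hi
  · intro A hA B hB hne
    simp only [botP, mem_image] at hA hB
    obtain ⟨i, -, rfl⟩ := hA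
    obtain ⟨j, -, rfl⟩ := hB
    simp only [disjoint_singleton]
    intro h; exact hne (by rw [h])
  · ext x
    simp only [mem_biUnion, mem_univ, iff_true, botP, mem_image, id]
    exact ⟨{x}, by simp [botP], mem_singleton_self x⟩

lemma botP_refines {Q : Finset (Finset (Fin n))} (hQ : IsPartition n Q) :
    Refines n (botP n) Q := by
  intro B hB
  simp only [botP, mem_image] at hB
  obtain ⟨i, -, rfl⟩ := hB
  obtain ⟨A, hA, hiA⟩ := mem_block hQ i
  exact ⟨A, hA, singleton_subset_iff.2 hiA⟩

lemma ntb_botP : (botP n).filter (fun A => 1 < A.card) = ∅ := by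
  rw [filter_eq_empty_iff]
  intro B hB
  simp only [botP, mem_image] at hB
  obtain ⟨i, -, rfl⟩ := hB
  simp

lemma eq_botP {R : Finset (Finset (Fin n))} (hR : IsPartition n R)
    (h : R.filter (fun A => 1 < A.card) = ∅) : R = botP n := by
  rw [filter_eq_empty_iff] at h
  ext B
  simp only [botP, mem_image]
  constructor
  · intro hB
    have h1 : B.card ≤ 1 := not_lt.1 (h hB)
    obtain ⟨x, hx⟩ := block_nonempty hR hB
    have : B.card = 1 := le_antisymm h1 (card_pos.2 ⟨x, hx⟩)
    obtain ⟨y, hy⟩ := card_eq_one.1 this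
    refine ⟨x, by simp, ?_⟩
    rw [hy] at hx ⊢
    rw [mem_singleton] at hx
    rw [hx]
  · rintro ⟨i, -, rfl⟩
    obtain ⟨C, hC, hiC⟩ := mem_block hR i
    have h1 : C.card ≤ 1 := not_lt.1 (h hC)
    have : C.card = 1 := le_antisymm h1 (card_pos.2 ⟨i, hiC⟩)
    obtain ⟨y, hy⟩ := card_eq_one.1 this
    rw [hy] at hiC hC
    rw [mem_singleton] at hiC
    rw [← hiC] at hC
    exact hC

/-- The modular partition with nontrivial block `A`. -/
def mpart (n : ℕ) (A : Finset (Fin n)) : Finset (Finset (Fin n)) :=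
  insert A ((univ \ A).image fun x => {x})

lemma mem_mpart {A B : Finset (Fin n)} :
    B ∈ mpart n A ↔ B = A ∨ ∃ x, x ∉ A ∧ B = {x} := by
  simp only [mpart, mem_insert, mem_image, mem_sdiff, mem_univ, true_and]
  constructor
  · rintro (h | ⟨x, hx, rfl⟩)
    · exact Or.inl h
    · exact Or.inr ⟨x, hx, rfl⟩
  · rintro (h | ⟨x, hx, rfl⟩)
    · exact Or.inl h
    · exact Or.inr ⟨x, hx, rfl⟩

lemma ntb_mpart {A : Finset (Fin n)} (hA : 1 < A.card) :
    (mpart n A).filter (fun B => 1 < B.card) = {A} := by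
  ext B
  simp only [mem_filter, mem_singleton, mem_mpart]
  constructor
  · rintro ⟨h | ⟨x, hx, rfl⟩, hc⟩
    · exact h
    · simp at hc
  · rintro rfl
    exact ⟨Or.inl rfl, hA⟩

lemma mpart_isPartition {A : Finset (Fin n)} (hA : 1 < A.card) :
    IsPartition n (mpart n A) := by
  refine ⟨?_, ?_, ?_⟩
  · intro h
    rw [mem_mpart] at h
    rcases h with h | ⟨x, -, h⟩
    · rw [← h] at hA; simp at hA
    · exact (singleton_ne_empty x) h.symm
  · intro B hB C hC hne
    rw [mem_mpart] at hB hC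
    rcases hB with rfl | ⟨x, hx, rfl⟩ <;> rcases hC with rfl | ⟨y, hy, rfl⟩
    · exact absurd rfl hne
    · exact disjoint_singleton_right.2 hy
    · exact disjoint_singleton_left.2 hx
    · refine disjoint_singleton_left.2 ?_
      rw [mem_singleton]
      intro h; exact hne (by rw [h])
  · ext x
    simp only [mem_biUnion, mem_univ, iff_true, id]
    by_cases hx : x ∈ A
    · exact ⟨A, by rw [mem_mpart]; exact Or.inl rfl, hx⟩
    · exact ⟨{x}, by rw [mem_mpart]; exact Or.inr ⟨x, hx, rfl⟩, mem_singleton_self x⟩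

lemma mpart_refines {Q : Finset (Finset (Fin n))} (hQ : IsPartition n Q)
    {A A₀ : Finset (Fin n)} (hA₀ : A₀ ∈ Q) (hsub : A ⊆ A₀) :
    Refines n (mpart n A) Q := by
  intro B hB
  rw [mem_mpart] at hB
  rcases hB with rfl | ⟨x, -, rfl⟩
  · exact ⟨A₀, hA₀, hsub⟩
  · obtain ⟨C, hC, hxC⟩ := mem_block hQ x
    exact ⟨C, hC, singleton_subset_iff.2 hxC⟩

lemma eq_mpart {R : Finset (Finset (Fin n))} (hR : IsPartition n R)
    {A : Finset (Fin n)} (h : R.filter (fun B => 1 < B.card) = {A}) :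
    R = mpart n A := by
  have hAR : A ∈ R ∧ 1 < A.card := by
    have : A ∈ R.filter (fun B => 1 < B.card) := h ▸ mem_singleton_self A
    simpa using this
  ext B
  rw [mem_mpart]
  constructor
  · intro hB
    by_cases hc : 1 < B.card
    · left
      have : B ∈ R.filter (fun B => 1 < B.card) := mem_filter.2 ⟨hB, hc⟩
      rw [h, mem_singleton] at this
      exact this
    · right
      obtain ⟨x, hx⟩ := block_nonempty hR hB
      have hc1 : B.card = 1 := le_antisymm (not_lt.1 hc) (card_pos.2 ⟨x, hx⟩)
      obtain ⟨y, hy⟩ := card_eq_one.1 hc1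
      subst hy
      rw [mem_singleton] at hx
      subst hx
      refine ⟨x, ?_, rfl⟩
      intro hxA
      have hne : ({x} : Finset (Fin n)) ≠ A := by
        intro hh
        rw [← hh] at hAR
        simp at hAR
      exact disjoint_left.1 (hR.2.1 _ hB A hAR.1 hne) (mem_singleton_self x) hxA
  · rintro (rfl | ⟨x, hx, rfl⟩)
    · exact hAR.1
    · obtain ⟨C, hC, hxC⟩ := mem_block hR x
      have hcC : C.card ≤ 1 := by
        by_contra hc
        have : C ∈ R.filter (fun B => 1 < B.card) := mem_filter.2 ⟨hC, not_le.1 hc⟩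
        rw [h, mem_singleton] at this
        exact hx (this ▸ hxC)
      have : C.card = 1 := le_antisymm hcC (card_pos.2 ⟨x, hxC⟩)
      obtain ⟨y, hy⟩ := card_eq_one.1 this
      rw [hy] at hxC hC
      rw [mem_singleton] at hxC
      rw [← hxC] at hC
      exact hC

/-- Inclusion-exclusion weights on subsets, defined by recursion so that
`∑ B ⊆ A, wfun B = v A - ∑ a ∈ A, v {a}`. -/
noncomputable def wfun (n : ℕ) (v : Finset (Fin n) → ℝ) (A : Finset (Fin n)) : ℝ :=
  (v A - ∑ a ∈ A, v {a}) - ∑ B ∈ (A.powerset.erase A).attach, wfun n v B.1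
termination_by A.card
decreasing_by
  have hB := B.2
  rw [mem_erase, mem_powerset] at hB
  exact Finset.card_lt_card (ssubset_of_ne_of_subset hB.1 hB.2)

lemma sum_powerset_wfun (v : Finset (Fin n) → ℝ) (A : Finset (Fin n)) :
    ∑ B ∈ A.powerset, wfun n v B = v A - ∑ a ∈ A, v {a} := by
  rw [← Finset.add_sum_erase _ _ (mem_powerset_self A)]
  rw [wfun, Finset.sum_attach]
  ring

lemma wfun_small (v : Finset (Fin n) → ℝ) (hv : v ∅ = 0) {A : Finset (Fin n)}
    (hA : A.card ≤ 1) : wfun n v A = 0 := by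
  interval_cases h : A.card
  · have : A = ∅ := card_eq_zero.1 h
    subst this
    rw [wfun, Finset.sum_attach]
    simp [hv]
  · obtain ⟨a, rfl⟩ := card_eq_one.1 h
    have he : wfun n v (∅ : Finset (Fin n)) = 0 := by
      rw [wfun, Finset.sum_attach]; simp [hv]
    rw [wfun, Finset.sum_attach]
    have : ({a} : Finset (Fin n)).powerset.erase {a} = {∅} := by
      rw [show ({a} : Finset (Fin n)).powerset = {∅, {a}} from rfl]
      ext B
      simp only [mem_erase, mem_insert, mem_singleton]
      constructor
      · rintro ⟨h1, h2 | h2⟩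
        · exact h2
        · exact absurd h2 h1
      · rintro rfl
        exact ⟨(singleton_ne_empty a).symm, Or.inl rfl⟩
    rw [this]
    simp [he]

/-- The candidate inverse function `g`, supported on modular partitions. -/
noncomputable def gfun (n : ℕ) (v : Finset (Fin n) → ℝ) (R : Finset (Finset (Fin n))) : ℝ :=
  (if R.filter (fun A => 1 < A.card) = ∅ then ∑ i : Fin n, v {i} else 0) +
  (if (R.filter (fun A => 1 < A.card)).card = 1 then
      ∑ A ∈ R.filter (fun A => 1 < A.card), wfun n v A else 0)

lemma gfun_nonmodular (v : Finset (Fin n) → ℝ) {R : Finset (Finset (Fin n))}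
    (h : 1 < (R.filter (fun A => 1 < A.card)).card) : gfun n v R = 0 := by
  rw [gfun, if_neg, if_neg]
  · ring
  · omega
  · intro he
    rw [he] at h
    simp at h

/-- Key lemma: `h(Q) = ∑_{R ≤ Q} g(R)` for every partition `Q`. -/
lemma sum_gfun (v : Finset (Fin n) → ℝ) (hv : v ∅ = 0) {Q : Finset (Finset (Fin n))}
    (hQ : IsPartition n Q) :
    ∑ R ∈ univ.filter (fun R => IsPartition n R ∧ Refines n R Q), gfun n v R
      = ∑ A ∈ Q, v A := by
  classical
  set S := univ.filter (fun R : Finset (Finset (Fin n)) => IsPartition n R ∧ Refines n R Q)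
    with hS
  have hmemS : ∀ R, R ∈ S ↔ IsPartition n R ∧ Refines n R Q := by
    intro R; simp [hS]
  simp only [gfun, Finset.sum_add_distrib]
  -- first summand
  have h1 : ∑ R ∈ S, (if R.filter (fun A => 1 < A.card) = ∅ then ∑ i : Fin n, v {i} else 0)
      = ∑ i : Fin n, v {i} := by
    rw [← Finset.sum_filter]
    have : S.filter (fun R => R.filter (fun A => 1 < A.card) = ∅) = {botP n} := by
      ext R
      simp only [mem_filter, mem_singleton, hmemS R]
      constructor
      · rintro ⟨⟨hR, -⟩, he⟩
        exact eq_botP hR he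
      · rintro rfl
        exact ⟨⟨botP_isPartition, botP_refines hQ⟩, ntb_botP⟩
    rw [this, sum_singleton]
  -- second summand
  have h2 : ∑ R ∈ S, (if (R.filter (fun A => 1 < A.card)).card = 1 then
        ∑ A ∈ R.filter (fun A => 1 < A.card), wfun n v A else 0)
      = ∑ A ∈ Q, (v A - ∑ a ∈ A, v {a}) := by
    rw [← Finset.sum_filter]
    have hbij : ∑ A' ∈ Q.biUnion (fun A => A.powerset.filter (fun B => 1 < B.card)),
        wfun n v A'
        = ∑ R ∈ S.filter (fun R => (R.filter (fun A => 1 < A.card)).card = 1),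
            ∑ A ∈ R.filter (fun A => 1 < A.card), wfun n v A := by
      refine Finset.sum_bij (fun A' _ => mpart n A') ?_ ?_ ?_ ?_
      · intro A' hA'
        simp only [mem_biUnion, mem_filter, mem_powerset] at hA'
        obtain ⟨A₀, hA₀, hsub, hcard⟩ := hA'
        simp only [mem_filter, hmemS]
        refine ⟨⟨mpart_isPartition hcard, mpart_refines hQ hA₀ hsub⟩, ?_⟩
        rw [ntb_mpart hcard]
        simp
      · intro A₁ h₁ A₂ h₂ heq
        simp only [mem_biUnion, mem_filter, mem_powerset] at h₁ h₂
        obtain ⟨-, -, -, hc₁⟩ := h₁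
        obtain ⟨-, -, -, hc₂⟩ := h₂
        change mpart n A₁ = mpart n A₂ at heq
        have : ({A₁} : Finset (Finset (Fin n))) = {A₂} := by
          rw [← ntb_mpart hc₁, ← ntb_mpart hc₂, heq]
        simpa using this
      · intro R hR
        simp only [mem_filter, hmemS] at hR
        obtain ⟨⟨hRp, hRref⟩, hcard⟩ := hR
        obtain ⟨A', hA'⟩ := card_eq_one.1 hcard
        have hA'mem : A' ∈ R ∧ 1 < A'.card := by
          have : A' ∈ R.filter (fun B => 1 < B.card) := hA' ▸ mem_singleton_self A'
          simpa using this
        obtain ⟨A₀, hA₀, hsub⟩ := hRref A' hA'mem.1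
        refine ⟨A', ?_, (eq_mpart hRp hA').symm⟩
        simp only [mem_biUnion, mem_filter, mem_powerset]
        exact ⟨A₀, hA₀, hsub, hA'mem.2⟩
      · intro A' hA'
        simp only [mem_biUnion, mem_filter, mem_powerset] at hA'
        obtain ⟨A₀, hA₀, hsub, hcard⟩ := hA'
        rw [ntb_mpart hcard, sum_singleton]
    rw [← hbij]
    rw [Finset.sum_biUnion]
    · refine Finset.sum_congr rfl ?_
      intro A hA
      have := sum_powerset_wfun v A
      rw [← Finset.sum_filter_add_sum_filter_not A.powerset (fun B => 1 < B.card)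
        (wfun n v)] at this
      have hz : ∑ B ∈ A.powerset.filter (fun B => ¬1 < B.card), wfun n v B = 0 := by
        refine Finset.sum_eq_zero ?_
        intro B hB
        simp only [mem_filter, not_lt] at hB
        exact wfun_small v hv hB.2
      rw [hz, add_zero] at this
      exact this
    · intro A hA B hB hne
      simp only [Finset.disjoint_left]
      intro C hCA hCB
      simp only [coe_mem, mem_coe, mem_filter, mem_powerset] at hCA hCB
      have hCne : C.Nonempty := card_pos.1 (by omega)
      obtain ⟨x, hx⟩ := hCne
      exact disjoint_left.1 (hQ.2.1 A hA B hB hne) (hCA.1 hx) (hCB.1 hx)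
  rw [h1, h2]
  have h3 : ∑ i : Fin n, v {i} = ∑ A ∈ Q, ∑ a ∈ A, v {a} := by
    have huniv : (univ : Finset (Fin n)) = Q.biUnion id := hQ.2.2.symm
    have hdisj : (↑Q : Set (Finset (Fin n))).PairwiseDisjoint (id : Finset (Fin n) → Finset (Fin n)) := by
      intro A hA B hB hne
      exact hQ.2.1 A (mem_coe.1 hA) B (mem_coe.1 hB) hne
    rw [huniv, Finset.sum_biUnion hdisj]
    rfl
  rw [h3, ← Finset.sum_add_distrib]
  refine Finset.sum_congr rfl ?_
  intro A hA
  ring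

end MoebiusAux

open MoebiusAux in
/-- let `h` be the partition function additively separated by a set
function `v` and let `mu` be the Möbius function of the partition lattice of `N`
(characterized by `mu P P = 1` and `∑_{Q ≤ R ≤ P} mu R P = 0` for `Q < P`).
Then the Möbius inversion `μ^h(P) = ∑_{Q ≤ P} mu Q P · h(Q)` vanishes at every
non-modular partition `P`, i.e. at every `P` with at least two blocks of
cardinality greater than `1`. -/
theorem moebius_of_separable_vanishes_off_modular (n : ℕ)
    (v : Finset (Fin n) → ℝ) (hv : v ∅ = 0)
    (h : Finset (Finset (Fin n)) → ℝ)
    (hsep : ∀ P : Finset (Finset (Fin n)), IsPartition n P → h P = ∑ A ∈ P, v A)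
    (mu : Finset (Finset (Fin n)) → Finset (Finset (Fin n)) → ℝ)
    (hdiag : ∀ P : Finset (Finset (Fin n)), IsPartition n P → mu P P = 1)
    (hrec : ∀ Q P : Finset (Finset (Fin n)),
      IsPartition n Q → IsPartition n P → Refines n Q P → Q ≠ P →
      ∑ R ∈ univ.filter
          (fun R : Finset (Finset (Fin n)) =>
            IsPartition n R ∧ Refines n Q R ∧ Refines n R P),
        mu R P = 0)
    (P : Finset (Finset (Fin n))) (hP : IsPartition n P)
    (hnonmod : 1 < (P.filter fun A => 1 < A.card).card) :
    ∑ Q ∈ univ.filter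
        (fun Q : Finset (Finset (Fin n)) => IsPartition n Q ∧ Refines n Q P),
      mu Q P * h Q = 0 := by
  classical
  set SP := univ.filter
    (fun Q : Finset (Finset (Fin n)) => IsPartition n Q ∧ Refines n Q P) with hSP
  have hmemSP : ∀ Q, Q ∈ SP ↔ IsPartition n Q ∧ Refines n Q P := by
    intro Q; simp [hSP]
  -- rewrite h Q as a sum of gfun over refinements
  have step1 : ∑ Q ∈ SP, mu Q P * h Q
      = ∑ Q ∈ SP, ∑ R ∈ SP, (if Refines n R Q then mu Q P * gfun n v R else 0) := by
    refine Finset.sum_congr rfl ?_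
    intro Q hQ
    obtain ⟨hQp, hQref⟩ := (hmemSP Q).1 hQ
    rw [hsep Q hQp, ← sum_gfun v hv hQp, Finset.mul_sum]
    rw [← Finset.sum_filter]
    have : SP.filter (fun R => Refines n R Q)
        = univ.filter (fun R => IsPartition n R ∧ Refines n R Q) := by
      rw [hSP, Finset.filter_filter]
      refine Finset.filter_congr ?_
      intro R _
      constructor
      · rintro ⟨⟨h1, -⟩, h3⟩
        exact ⟨h1, h3⟩
      · rintro ⟨h1, h2⟩
        exact ⟨⟨h1, refines_trans h2 hQref⟩, h2⟩
    rw [this]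
  rw [step1, Finset.sum_comm]
  refine Finset.sum_eq_zero ?_
  intro R hR
  obtain ⟨hRp, hRref⟩ := (hmemSP R).1 hR
  have hfact : ∑ Q ∈ SP, (if Refines n R Q then mu Q P * gfun n v R else 0)
      = (∑ Q ∈ univ.filter (fun Q => IsPartition n Q ∧ Refines n R Q ∧ Refines n Q P),
          mu Q P) * gfun n v R := by
    rw [Finset.sum_mul, ← Finset.sum_filter]
    have : SP.filter (fun Q => Refines n R Q)
        = univ.filter (fun Q => IsPartition n Q ∧ Refines n R Q ∧ Refines n Q P) := by
      rw [hSP, Finset.filter_filter]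
      refine Finset.filter_congr ?_
      intro Q _
      tauto
    rw [this]
  rw [hfact]
  by_cases hRP : R = P
  · subst hRP
    have : gfun n v R = 0 := gfun_nonmodular v hnonmod
    rw [this, mul_zero]
  · rw [hrec R P hRp hP hRref hRP, zero_mul]
end
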